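/- If Δ is a Gorenstein* simplicial complex on [n] of dimension d-1, then for every R ⊆ [n] with p + |R| = d - 1 and p ≤ d - 2, H̃_p(Δ_{-R}) = 0; in particular Δ is 2-Cohen-Macaulay. -/

import Mathlib

open Finset

namespace SCx

variable (k : Type) [Field k] {n : ℕ}

/-- An (abstract) simplicial complex on the vertex set `Fin n`:
a set of finsets closed under taking subsets. -/
def IsComplex (Δ : Set (Finset (Fin n))) : Prop :=
  ∀ F ∈ Δ, ∀ G ⊆ F, G ∈ Δ

/-- Simplicial `p`-chains with coefficients in `k`: functions on the faces of
cardinality `p+1`. -/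
abbrev Chains (Δ : Set (Finset (Fin n))) (p : ℤ) : Type :=
  {F : Finset (Fin n) // F ∈ Δ ∧ (F.card : ℤ) = p + 1} → k

open Classical in
/-- The underlying function of the simplicial boundary map, written via its
transpose formula:
`(∂ f) G = ∑_{x : insert x G ∈ Δ} (-1)^{pos of x in insert x G} f (insert x G)`. -/
noncomputable def boundaryFun (Δ : Set (Finset (Fin n))) (p : ℤ)
    (f : Chains k Δ p) : Chains k Δ (p - 1) := fun G => ∑ x : Fin n,
  if h : x ∉ G.1 ∧ insert x G.1 ∈ Δ then
    (-1 : k) ^ (G.1.filter (fun y => y < x)).card *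
      f ⟨insert x G.1, h.2, by
        have hc := G.2.2
        rw [Finset.card_insert_of_notMem h.1]
        push_cast at hc ⊢
        omega⟩
  else 0

/-- The simplicial boundary map. -/
noncomputable def boundary (Δ : Set (Finset (Fin n))) (p : ℤ) :
    Chains k Δ p →ₗ[k] Chains k Δ (p - 1) where
  toFun := boundaryFun k Δ p
  map_add' f g := by
    funext G
    unfold boundaryFun
    rw [Pi.add_apply]
    rw [← Finset.sum_add_distrib]
    refine Finset.sum_congr rfl fun x _ => ?_
    split_ifs with h
    · rw [Pi.add_apply]; ring
    · rw [add_zero]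
  map_smul' c f := by
    funext G
    unfold boundaryFun
    simp only [RingHom.id_apply, Pi.smul_apply, smul_eq_mul, Finset.mul_sum]
    refine Finset.sum_congr rfl fun x _ => ?_
    split_ifs with h
    · ring
    · rw [mul_zero]

/-- Transport of chains along an equality of degrees. -/
noncomputable def chainsCongr (Δ : Set (Finset (Fin n))) {p q : ℤ} (h : p = q) :
    Chains k Δ p ≃ₗ[k] Chains k Δ q := by
  subst h; exact LinearEquiv.refl k _

noncomputable def cycles (Δ : Set (Finset (Fin n))) (p : ℤ) : Submodule k (Chains k Δ p) :=
  LinearMap.ker (boundary k Δ p)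

noncomputable def boundaries (Δ : Set (Finset (Fin n))) (p : ℤ) : Submodule k (Chains k Δ p) :=
  LinearMap.range ((chainsCongr k Δ (show p + 1 - 1 = p by ring)).toLinearMap ∘ₗ
    boundary k Δ (p + 1))

/-- Reduced simplicial homology of `Δ` in degree `p`, with coefficients in the field `k`,
defined as cycles modulo (boundaries intersected with cycles).  With this convention
`H̃_{-1}({∅}) = k`. -/
abbrev ReducedHomology (Δ : Set (Finset (Fin n))) (p : ℤ) :=
  ↥(cycles k Δ p) ⧸ (Submodule.comap (cycles k Δ p).subtype (boundaries k Δ p))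

/-- The Alexander dual of `Δ`. -/
def dual (Δ : Set (Finset (Fin n))) : Set (Finset (Fin n)) := {F | Fᶜ ∉ Δ}

/-- The restriction `Δ_R` of `Δ` to a vertex subset `R`. -/
def restrict (Δ : Set (Finset (Fin n))) (R : Finset (Fin n)) : Set (Finset (Fin n)) :=
  {F | F ∈ Δ ∧ F ⊆ R}

/-- The link `lk_Δ S`. -/
def link (Δ : Set (Finset (Fin n))) (S : Finset (Fin n)) : Set (Finset (Fin n)) :=
  {F | Disjoint F S ∧ F ∪ S ∈ Δ}

/-- `Δ_R^{S,T} = {F ⊆ R : F ∪ S ∈ Δ}` (for `T` the complement of `R ∪ S`). -/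
def sub (Δ : Set (Finset (Fin n))) (R S : Finset (Fin n)) : Set (Finset (Fin n)) :=
  {F | F ⊆ R ∧ F ∪ S ∈ Δ}

/-- `Δ` has dimension `d - 1`, i.e. `d` is the maximal cardinality of a face. -/
def IsDim (Δ : Set (Finset (Fin n))) (d : ℕ) : Prop :=
  (∀ F ∈ Δ, F.card ≤ d) ∧ ∃ F ∈ Δ, F.card = d

/-- `Δ` has frame dimension `c - 1`, i.e. `c` is the largest integer such that
every `c`-subset of `[n]` is a face of `Δ`. -/
def IsFrame (Δ : Set (Finset (Fin n))) (c : ℕ) : Prop :=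
  (∀ F : Finset (Fin n), F.card ≤ c → F ∈ Δ) ∧
    ∃ F : Finset (Fin n), F.card = c + 1 ∧ F ∉ Δ

/-- A facet: a maximal face. -/
def IsFacet (Δ : Set (Finset (Fin n))) (F : Finset (Fin n)) : Prop :=
  F ∈ Δ ∧ ∀ G ∈ Δ, F ⊆ G → F = G

open Classical

/-- sign -/
noncomputable def sgn (G : Finset (Fin n)) (x : Fin n) : k :=
  (-1 : k) ^ (G.filter (fun y => y < x)).card

/-- model boundary map -/
noncomputable def Dm (φ : Finset (Fin n) → k) : Finset (Fin n) → k := fun G =>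
  ∑ x : Fin n, if x ∉ G then sgn k G x * φ (insert x G) else 0

def IsSupported (Γ : Set (Finset (Fin n))) (q : ℤ) (φ : Finset (Fin n) → k) : Prop :=
  ∀ F, φ F ≠ 0 → F ∈ Γ ∧ (F.card : ℤ) = q

variable {k}

lemma sgn_mul_self (G : Finset (Fin n)) (x : Fin n) : sgn k G x * sgn k G x = 1 := by
  rw [sgn, ← pow_add, ← two_mul, pow_mul]
  norm_num

lemma sgn_ne_zero (G : Finset (Fin n)) (x : Fin n) : sgn k G x ≠ 0 := by
  rw [sgn]
  exact pow_ne_zero _ (by norm_num)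

lemma sgn_insert (G : Finset (Fin n)) {x : Fin n} (hx : x ∉ G) (y : Fin n) :
    sgn k (insert x G) y = (if x < y then -1 else 1) * sgn k G y := by
  rw [sgn, sgn, filter_insert]
  split_ifs with h
  · rw [card_insert_of_notMem (fun hc => hx (mem_filter.1 hc).1), pow_succ]
    ring
  · rw [one_mul]

lemma sgn_key {G : Finset (Fin n)} {x y : Fin n} (hxy : x ≠ y) (hx : x ∉ G) (hy : y ∉ G) :
    sgn k (insert x G) y * sgn k G x = -(sgn k (insert y G) x * sgn k G y) := by
  rw [sgn_insert G hx y, sgn_insert G hy x]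
  rcases hxy.lt_or_gt with h | h
  · rw [if_pos h, if_neg (asymm h)]; ring
  · rw [if_neg (asymm h), if_pos h]; ring

lemma Dm_add (φ ψ : Finset (Fin n) → k) : Dm k (φ + ψ) = Dm k φ + Dm k ψ := by
  funext G
  simp only [Dm, Pi.add_apply, ← Finset.sum_add_distrib]
  refine Finset.sum_congr rfl fun x _ => ?_
  split_ifs with h <;> ring

lemma Dm_sub (φ ψ : Finset (Fin n) → k) : Dm k (φ - ψ) = Dm k φ - Dm k ψ := by
  funext G
  simp only [Dm, Pi.sub_apply, ← Finset.sum_sub_distrib]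
  refine Finset.sum_congr rfl fun x _ => ?_
  split_ifs with h <;> ring

lemma Dm_smul (c : k) (φ : Finset (Fin n) → k) : Dm k (c • φ) = c • Dm k φ := by
  funext G
  simp only [Dm, Pi.smul_apply, smul_eq_mul, Finset.mul_sum]
  refine Finset.sum_congr rfl fun x _ => ?_
  split_ifs with h <;> ring

lemma Dm_zero : Dm k (0 : Finset (Fin n) → k) = 0 := by
  funext G
  simp [Dm]

noncomputable def extend (Γ : Set (Finset (Fin n))) (p : ℤ) (f : Chains k Γ p) :
    Finset (Fin n) → k := fun F =>
  if h : F ∈ Γ ∧ (F.card : ℤ) = p + 1 then f ⟨F, h⟩ else 0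

section
variable (k)

def Van (Γ : Set (Finset (Fin n))) (p : ℤ) : Prop :=
  ∀ z : Finset (Fin n) → k, IsSupported k Γ (p + 1) z → Dm k z = 0 →
    ∃ w, IsSupported k Γ (p + 1 + 1) w ∧ Dm k w = z

end

lemma extend_pos {Γ : Set (Finset (Fin n))} {p : ℤ} (f : Chains k Γ p) {F : Finset (Fin n)}
    (h : F ∈ Γ ∧ (F.card : ℤ) = p + 1) : extend Γ p f F = f ⟨F, h⟩ := dif_pos h

lemma extend_neg {Γ : Set (Finset (Fin n))} {p : ℤ} (f : Chains k Γ p) {F : Finset (Fin n)}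
    (h : ¬(F ∈ Γ ∧ (F.card : ℤ) = p + 1)) : extend Γ p f F = 0 := dif_neg h

lemma extend_supported (Γ : Set (Finset (Fin n))) (p : ℤ) (f : Chains k Γ p) :
    IsSupported k Γ (p + 1) (extend Γ p f) := by
  intro F hF
  by_cases h : F ∈ Γ ∧ (F.card : ℤ) = p + 1
  · exact h
  · exact absurd (extend_neg f h) hF

lemma extend_injective {Γ : Set (Finset (Fin n))} {p : ℤ} {f g : Chains k Γ p}
    (h : extend Γ p f = extend Γ p g) : f = g := by
  funext F
  have := congrFun h F.1
  rwa [extend_pos f F.2, extend_pos g F.2] at this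

lemma extend_zero (Γ : Set (Finset (Fin n))) (p : ℤ) :
    extend Γ p (0 : Chains k Γ p) = 0 := by
  funext F
  by_cases h : F ∈ Γ ∧ (F.card : ℤ) = p + 1
  · rw [extend_pos _ h]; rfl
  · rw [extend_neg _ h]; rfl

lemma extend_smul (Γ : Set (Finset (Fin n))) (p : ℤ) (c : k) (f : Chains k Γ p) :
    extend Γ p (c • f) = c • extend Γ p f := by
  funext F
  by_cases h : F ∈ Γ ∧ (F.card : ℤ) = p + 1
  · rw [Pi.smul_apply, extend_pos _ h, extend_pos _ h]; rfl
  · rw [Pi.smul_apply, extend_neg _ h, extend_neg _ h, smul_zero]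

lemma extend_eq_self {Γ : Set (Finset (Fin n))} {p : ℤ} {φ : Finset (Fin n) → k}
    (hφ : IsSupported k Γ (p + 1) φ) :
    extend Γ p (fun F => φ F.1) = φ := by
  funext F
  by_cases h : F ∈ Γ ∧ (F.card : ℤ) = p + 1
  · rw [extend_pos _ h]
  · rw [extend_neg _ h]
    by_contra hne
    exact h (hφ F fun h0 => hne h0.symm)

lemma chainsCongr_extend {Γ : Set (Finset (Fin n))} {p q : ℤ} (h : p = q) (f : Chains k Γ p) :
    extend Γ q (chainsCongr k Γ h f) = extend Γ p f := by
  subst h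
  rfl

lemma Dm_extend {Γ : Set (Finset (Fin n))} (hΓ : IsComplex Γ) (p : ℤ) (f : Chains k Γ p) :
    Dm k (extend Γ p f) = extend Γ (p - 1) (boundary k Γ p f) := by
  funext G
  rw [Dm]
  by_cases hG : G ∈ Γ ∧ (G.card : ℤ) = p - 1 + 1
  · rw [extend_pos _ hG]
    show _ = boundaryFun k Γ p f ⟨G, hG⟩
    rw [boundaryFun]
    refine Finset.sum_congr rfl fun x _ => ?_
    by_cases hx : x ∉ G
    · rw [if_pos hx]
      by_cases hi : insert x G ∈ Γ
      · have hcard : ((insert x G).card : ℤ) = p + 1 := by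
          rw [Finset.card_insert_of_notMem hx]
          push_cast
          omega
        rw [dif_pos (show x ∉ G ∧ insert x G ∈ Γ by exact ⟨hx, hi⟩),
          extend_pos f ⟨hi, hcard⟩]
        rfl
      · rw [dif_neg (fun hc => hi hc.2), extend_neg f (fun hc => hi hc.1), mul_zero]
    · rw [if_neg hx, dif_neg (fun hc => hx hc.1)]
  · rw [extend_neg _ hG]
    refine Finset.sum_eq_zero fun x _ => ?_
    by_cases hx : x ∉ G
    · rw [if_pos hx, extend_neg f ?_, mul_zero]
      rintro ⟨hi, hc⟩
      refine hG ⟨hΓ _ hi _ (Finset.subset_insert x G), ?_⟩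
      rw [Finset.card_insert_of_notMem hx] at hc
      push_cast at hc ⊢
      omega
    · rw [if_neg hx]

lemma van_of_subsingleton {Γ : Set (Finset (Fin n))} (hΓ : IsComplex Γ) {p : ℤ}
    (h : Subsingleton (ReducedHomology k Γ p)) : Van k Γ p := by
  intro z hz hcyc
  have hez : extend Γ p (fun F => z F.1) = z := extend_eq_self hz
  have hfc : boundary k Γ p (fun F => z F.1) = 0 := by
    apply extend_injective (p := p - 1)
    rw [← Dm_extend hΓ, hez, hcyc, extend_zero]
  have hfm : (fun F => z F.1) ∈ cycles k Γ p := LinearMap.mem_ker.2 hfc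
  have hmem : (⟨_, hfm⟩ : ↥(cycles k Γ p)) ∈
      Submodule.comap (cycles k Γ p).subtype (boundaries k Γ p) := by
    have h0 := Subsingleton.elim (α := ReducedHomology k Γ p)
      (Submodule.Quotient.mk ⟨_, hfm⟩) 0
    exact (Submodule.Quotient.mk_eq_zero _).1 h0
  rw [Submodule.mem_comap] at hmem
  obtain ⟨g, hg⟩ := hmem
  refine ⟨extend Γ (p + 1) g, extend_supported _ _ _, ?_⟩
  rw [Dm_extend hΓ]
  have : extend Γ (p + 1 - 1) (boundary k Γ (p + 1) g) = extend Γ p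
      (chainsCongr k Γ (show p + 1 - 1 = p by ring) (boundary k Γ (p + 1) g)) :=
    (chainsCongr_extend _ _).symm
  rw [this]
  have hg' : chainsCongr k Γ (show p + 1 - 1 = p by ring) (boundary k Γ (p + 1) g)
      = (fun F => z F.1) := hg
  rw [hg', hez]

lemma subsingleton_of_van {Γ : Set (Finset (Fin n))} (hΓ : IsComplex Γ) {p : ℤ}
    (hv : Van k Γ p) : Subsingleton (ReducedHomology k Γ p) := by
  rw [Submodule.Quotient.subsingleton_iff, Submodule.eq_top_iff']
  rintro ⟨f, hf⟩
  rw [Submodule.mem_comap]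
  have hf' : boundary k Γ p f = 0 := LinearMap.mem_ker.1 hf
  obtain ⟨w, hws, hwd⟩ := hv (extend Γ p f) (extend_supported _ _ _)
    (by rw [Dm_extend hΓ, hf', extend_zero])
  have hew : extend Γ (p + 1) (fun F => w F.1) = w := extend_eq_self hws
  refine ⟨(fun F => w F.1), ?_⟩
  show chainsCongr k Γ _ (boundary k Γ (p + 1) (fun F => w F.1)) = f
  apply extend_injective (p := p)
  rw [chainsCongr_extend, ← Dm_extend hΓ, hew, hwd]

lemma exists_nonzero_cycle {Γ : Set (Finset (Fin n))} (hΓ : IsComplex Γ) {p : ℤ}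
    (he : Nonempty (ReducedHomology k Γ p ≃ₗ[k] k)) :
    ∃ φ, IsSupported k Γ (p + 1) φ ∧ Dm k φ = 0 ∧ φ ≠ 0 := by
  obtain ⟨e⟩ := he
  obtain ⟨f, hf⟩ := Submodule.Quotient.mk_surjective _ (e.symm 1)
  refine ⟨extend Γ p f.1, extend_supported _ _ _, ?_, ?_⟩
  · rw [Dm_extend hΓ, LinearMap.mem_ker.1 f.2, extend_zero]
  · intro h0
    have hf0 : f = 0 := by
      ext F
      have := congrFun h0 F.1
      rw [extend_pos _ F.2] at this
      exact this
    rw [hf0] at hf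
    have : e.symm 1 = 0 := by rw [← hf]; simp
    have h1 : (1 : k) = 0 := by
      have := congrArg e this
      rwa [e.apply_symm_apply, map_zero] at this
    exact one_ne_zero h1
noncomputable def xpart (x : Fin n) (φ : Finset (Fin n) → k) : Finset (Fin n) → k :=
  fun F => if x ∈ F then φ F else 0

noncomputable def opart (x : Fin n) (φ : Finset (Fin n) → k) : Finset (Fin n) → k :=
  fun F => if x ∈ F then 0 else φ F

noncomputable def toLk (x : Fin n) (φ : Finset (Fin n) → k) : Finset (Fin n) → k :=
  fun G => if x ∈ G then 0 else sgn k G x * φ (insert x G)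

noncomputable def fromLk (x : Fin n) (v : Finset (Fin n) → k) : Finset (Fin n) → k :=
  fun F => if x ∈ F then sgn k (F.erase x) x * v (F.erase x) else 0

lemma toLk_of_mem {x : Fin n} {G : Finset (Fin n)} (φ : Finset (Fin n) → k) (h : x ∈ G) :
    toLk x φ G = 0 := if_pos h

lemma toLk_of_not_mem {x : Fin n} {G : Finset (Fin n)} (φ : Finset (Fin n) → k) (h : x ∉ G) :
    toLk x φ G = sgn k G x * φ (insert x G) := if_neg h

lemma fromLk_of_mem {x : Fin n} {F : Finset (Fin n)} (v : Finset (Fin n) → k) (h : x ∈ F) :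
    fromLk x v F = sgn k (F.erase x) x * v (F.erase x) := if_pos h

def XFree (x : Fin n) (φ : Finset (Fin n) → k) : Prop := ∀ F, x ∈ F → φ F = 0

lemma xpart_add_opart (x : Fin n) (φ : Finset (Fin n) → k) : xpart x φ + opart x φ = φ := by
  funext F
  rw [Pi.add_apply, xpart, opart]
  split_ifs <;> ring

lemma toLk_xfree (x : Fin n) (φ : Finset (Fin n) → k) : XFree x (toLk x φ) :=
  fun F hF => if_pos hF

lemma opart_xfree (x : Fin n) (φ : Finset (Fin n) → k) : XFree x (opart x φ) :=
  fun F hF => if_pos hF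

lemma fromLk_of_not_mem (x : Fin n) (v : Finset (Fin n) → k) {F : Finset (Fin n)}
    (h : x ∉ F) : fromLk x v F = 0 := if_neg h

lemma fromLk_toLk (x : Fin n) (φ : Finset (Fin n) → k) : fromLk x (toLk x φ) = xpart x φ := by
  funext F
  rw [fromLk, xpart]
  by_cases h : x ∈ F
  · rw [if_pos h, if_pos h, toLk, if_neg (Finset.notMem_erase x F),
      Finset.insert_erase h, ← mul_assoc, sgn_mul_self, one_mul]
  · rw [if_neg h, if_neg h]

lemma toLk_fromLk (x : Fin n) {v : Finset (Fin n) → k} (hv : XFree x v) :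
    toLk x (fromLk x v) = v := by
  funext G
  rw [toLk]
  by_cases h : x ∈ G
  · rw [if_pos h]
    exact (hv G h).symm
  · rw [if_neg h, fromLk, if_pos (Finset.mem_insert_self x G), Finset.erase_insert h,
      ← mul_assoc, sgn_mul_self, one_mul]

lemma toLk_zero (x : Fin n) : toLk x (0 : Finset (Fin n) → k) = 0 := by
  funext G
  rw [toLk]
  split_ifs <;> simp

lemma fromLk_zero (x : Fin n) : fromLk x (0 : Finset (Fin n) → k) = 0 := by
  funext G
  rw [fromLk]
  split_ifs <;> simp

lemma fromLk_smul (x : Fin n) (c : k) (v : Finset (Fin n) → k) :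
    fromLk x (c • v) = c • fromLk x v := by
  funext G
  rw [Pi.smul_apply, fromLk, fromLk]
  split_ifs with h
  · simp only [Pi.smul_apply, smul_eq_mul]; ring
  · rw [smul_zero]

lemma Dm_xfree {x : Fin n} {φ : Finset (Fin n) → k} (hφ : XFree x φ) : XFree x (Dm k φ) := by
  intro F hF
  rw [Dm]
  refine Finset.sum_eq_zero fun y _ => ?_
  by_cases hy : y ∉ F
  · rw [if_pos hy, hφ _ (Finset.mem_insert_of_mem hF), mul_zero]
  · rw [if_neg hy]

/-- The cone identity. -/
lemma cone_identity (x : Fin n) {v : Finset (Fin n) → k} (hv : XFree x v) :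
    Dm k (fromLk x v) = v - fromLk x (Dm k v) := by
  funext F
  rw [Pi.sub_apply, Dm]
  by_cases hxF : x ∈ F
  · have hxF' : x ∉ F.erase x := Finset.notMem_erase x F
    have hins : insert x (F.erase x) = F := Finset.insert_erase hxF
    rw [hv F hxF, fromLk_of_mem (Dm k v) hxF, Dm, zero_sub, Finset.mul_sum,
      ← Finset.sum_neg_distrib]
    refine Finset.sum_congr rfl fun y _ => ?_
    by_cases hyx : y = x
    · subst hyx
      rw [if_neg (fun hc => hc hxF), if_pos hxF', ← mul_assoc, sgn_mul_self, one_mul,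
        hins, hv F hxF, neg_zero]
    · by_cases hyF' : y ∈ F.erase x
      · have hyF : y ∈ F := Finset.mem_of_mem_erase hyF'
        rw [if_neg (fun hc => hc hyF), if_neg (fun hc => hc hyF'), mul_zero, neg_zero]
      · have hyF : y ∉ F := by
          rw [← hins]
          intro hc
          rcases Finset.mem_insert.1 hc with h | h
          · exact hyx h
          · exact hyF' h
        have hxmem : x ∈ insert y F := Finset.mem_insert_of_mem hxF
        rw [if_pos hyF, if_pos hyF', fromLk_of_mem v hxmem, Finset.erase_insert_of_ne hyx]
        have hkey := sgn_key (k := k) (G := F.erase x) (Ne.symm hyx) hxF' hyF'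
        rw [hins] at hkey
        have hb := sgn_mul_self (k := k) (F.erase x) x
        have hc := sgn_mul_self (k := k) (insert y (F.erase x)) x
        have hsgn : sgn k F y * sgn k (insert y (F.erase x)) x =
            -(sgn k (F.erase x) x * sgn k (F.erase x) y) := by
          linear_combination (sgn k (F.erase x) x * sgn k (insert y (F.erase x)) x) * hkey -
            (sgn k F y * sgn k (insert y (F.erase x)) x) * hb -
            (sgn k (F.erase x) x * sgn k (F.erase x) y) * hc
        linear_combination (v (insert y (F.erase x))) * hsgn
  · rw [fromLk_of_not_mem x _ hxF, sub_zero]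
    rw [Finset.sum_eq_single x]
    · rw [if_pos hxF, fromLk_of_mem v (Finset.mem_insert_self x F), Finset.erase_insert hxF,
        ← mul_assoc, sgn_mul_self, one_mul]
    · intro y _ hyx
      by_cases hyF : y ∉ F
      · rw [if_pos hyF, fromLk_of_not_mem x v (by
          intro hc
          rcases Finset.mem_insert.1 hc with h | h
          · exact hyx h.symm
          · exact hxF h), mul_zero]
      · rw [if_neg hyF]
    · intro hc
      exact absurd (Finset.mem_univ x) hc

/-- `toLk` of a chain whose boundary is supported away from `x` is a cycle. -/
lemma toLk_cycle {x : Fin n} {φ : Finset (Fin n) → k}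
    (h : ∀ F, x ∈ F → Dm k φ F = 0) : Dm k (toLk x φ) = 0 := by
  have hsplit : Dm k φ = Dm k (xpart x φ) + Dm k (opart x φ) := by
    rw [← Dm_add, xpart_add_opart]
  have hxz : ∀ F, x ∈ F → Dm k (xpart x φ) F = 0 := by
    intro F hF
    have h1 := h F hF
    have h2 := Dm_xfree (opart_xfree x φ) F hF
    rw [hsplit, Pi.add_apply, h2, add_zero] at h1
    exact h1
  have hK := cone_identity x (toLk_xfree x φ)
  rw [fromLk_toLk] at hK
  have hfl : fromLk x (Dm k (toLk x φ)) = 0 := by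
    funext F
    by_cases hF : x ∈ F
    · have := congrFun hK F
      rw [Pi.sub_apply, toLk_of_mem φ hF, zero_sub, hxz F hF] at this
      rw [Pi.zero_apply, ← neg_eq_zero]
      exact this.symm
    · rw [fromLk_of_not_mem x _ hF]
      rfl
  have := toLk_fromLk x (Dm_xfree (toLk_xfree x φ))
  rw [hfl, toLk_zero] at this
  exact this.symm

lemma toLk_supported {Γ : Set (Finset (Fin n))} (hΓ : IsComplex Γ) {x : Fin n} {q : ℤ}
    {φ : Finset (Fin n) → k} (hφ : IsSupported k Γ q φ) :
    IsSupported k (link Γ {x}) (q - 1) (toLk x φ) := by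
  intro G hG
  by_cases hx : x ∈ G
  · rw [toLk_of_mem φ hx] at hG
    exact absurd rfl hG
  · rw [toLk_of_not_mem φ hx] at hG
    have h2 := right_ne_zero_of_mul hG
    obtain ⟨hmem, hcard⟩ := hφ _ h2
    refine ⟨⟨Finset.disjoint_singleton_right.2 hx, ?_⟩, ?_⟩
    · rwa [Finset.union_comm, ← Finset.insert_eq]
    · rw [Finset.card_insert_of_notMem hx] at hcard
      push_cast at hcard ⊢
      omega

/-- The generic exact-sequence chase. -/
lemma gen_chase {Γ : Set (Finset (Fin n))} (hΓ : IsComplex Γ) (x : Fin n) (p : ℤ)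
    (hΓv : Van k Γ p) (hlk : Van k (link Γ {x}) p) : Van k (restrict Γ {x}ᶜ) p := by
  intro z hz hzc
  have hzΓ : IsSupported k Γ (p + 1) z := fun F hF => ⟨(hz F hF).1.1, (hz F hF).2⟩
  have hzx : XFree x z := by
    intro F hF
    by_contra h0
    have := (hz F h0).1.2
    exact absurd rfl (Finset.notMem_singleton.1 (Finset.mem_compl.1 (this hF)))
  obtain ⟨w, hws, hwd⟩ := hΓv z hzΓ hzc
  have hu_supp : IsSupported k (link Γ {x}) (p + 1) (toLk x w) := by
    have := toLk_supported hΓ (x := x) hws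
    intro G hG
    obtain ⟨h1, h2⟩ := this G hG
    exact ⟨h1, by omega⟩
  have hu_cyc : Dm k (toLk x w) = 0 := toLk_cycle (fun F hF => by rw [hwd]; exact hzx F hF)
  obtain ⟨v, hvs, hvd⟩ := hlk (toLk x w) hu_supp hu_cyc
  have hvXF : XFree x v := by
    intro F hF
    by_contra h0
    have := (hvs F h0).1.1
    exact absurd hF (Finset.disjoint_singleton_right.1 this)
  refine ⟨opart x w + v, ?_, ?_⟩
  · intro F hF
    have hcases : opart x w F ≠ 0 ∨ v F ≠ 0 := by
      by_contra hc
      push_neg at hc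
      rw [Pi.add_apply, hc.1, hc.2, add_zero] at hF
      exact hF rfl
    rcases hcases with h | h
    · have hxF : x ∉ F := fun hc => h (opart_xfree x w F hc)
      have hwF : w F ≠ 0 := by
        rw [opart, if_neg hxF] at h
        exact h
      obtain ⟨h1, h2⟩ := hws F hwF
      exact ⟨⟨h1, fun a ha => Finset.mem_compl.2 (fun hc => hxF
        ((Finset.mem_singleton.1 hc) ▸ ha))⟩, h2⟩
    · obtain ⟨⟨hd, hm⟩, h2⟩ := hvs F h
      have hxF : x ∉ F := Finset.disjoint_singleton_right.1 hd
      refine ⟨⟨hΓ _ hm _ Finset.subset_union_left, fun a ha => Finset.mem_compl.2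
        (fun hc => hxF ((Finset.mem_singleton.1 hc) ▸ ha))⟩, by omega⟩
  · have hxw : Dm k (xpart x w) = toLk x w := by
      rw [← fromLk_toLk x w, cone_identity x (toLk_xfree x w), hu_cyc, fromLk_zero, sub_zero]
    have hsplit : Dm k w = Dm k (xpart x w) + Dm k (opart x w) := by
      rw [← Dm_add, xpart_add_opart]
    rw [Dm_add, hvd]
    have : Dm k (opart x w) = z - toLk x w := by
      rw [← hwd, hsplit, hxw]
      ring
    rw [this]
    ring

/-- The hard chase, at one below top degree. -/
lemma hard_chase {Γ : Set (Finset (Fin n))} (hΓ : IsComplex Γ) (x : Fin n) (p : ℤ)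
    (hΓv : Van k Γ p)
    (hζ : ∃ ζ, IsSupported k Γ (p + 1 + 1) ζ ∧ Dm k ζ = 0 ∧ ζ ≠ 0)
    (hsup : ∀ ζ, IsSupported k Γ (p + 1 + 1) ζ → Dm k ζ = 0 → ζ ≠ 0 →
      ∃ F, x ∈ F ∧ ζ F ≠ 0)
    (h1dim : ∀ u η, IsSupported k (link Γ {x}) (p + 1) u → Dm k u = 0 →
      IsSupported k (link Γ {x}) (p + 1) η → Dm k η = 0 → η ≠ 0 → ∃ c : k, u = c • η) :
    Van k (restrict Γ {x}ᶜ) p := by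
  intro z hz hzc
  have hzΓ : IsSupported k Γ (p + 1) z := fun F hF => ⟨(hz F hF).1.1, (hz F hF).2⟩
  have hzx : XFree x z := by
    intro F hF
    by_contra h0
    have := (hz F h0).1.2
    exact absurd rfl (Finset.notMem_singleton.1 (Finset.mem_compl.1 (this hF)))
  obtain ⟨w, hws, hwd⟩ := hΓv z hzΓ hzc
  obtain ⟨ζ, hζs, hζc, hζ0⟩ := hζ
  -- η := toLk x ζ
  have hη_supp : IsSupported k (link Γ {x}) (p + 1) (toLk x ζ) := by
    have := toLk_supported hΓ (x := x) hζs
    intro G hG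
    obtain ⟨h1, h2⟩ := this G hG
    exact ⟨h1, by omega⟩
  have hη_cyc : Dm k (toLk x ζ) = 0 := toLk_cycle (fun F hF => by rw [hζc]; rfl)
  have hη_ne : toLk x ζ ≠ 0 := by
    obtain ⟨F, hxF, hζF⟩ := hsup ζ hζs hζc hζ0
    intro h0
    have := congrFun h0 (F.erase x)
    rw [toLk_of_not_mem ζ (Finset.notMem_erase x F), Finset.insert_erase hxF,
      Pi.zero_apply] at this
    exact (mul_ne_zero (sgn_ne_zero _ _) hζF) this
  have hu_supp : IsSupported k (link Γ {x}) (p + 1) (toLk x w) := by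
    have := toLk_supported hΓ (x := x) hws
    intro G hG
    obtain ⟨h1, h2⟩ := this G hG
    exact ⟨h1, by omega⟩
  have hu_cyc : Dm k (toLk x w) = 0 := toLk_cycle (fun F hF => by rw [hwd]; exact hzx F hF)
  obtain ⟨c, hc⟩ := h1dim (toLk x w) (toLk x ζ) hu_supp hu_cyc hη_supp hη_cyc hη_ne
  refine ⟨w - c • ζ, ?_, ?_⟩
  · intro F hF
    have hwζ : w F ≠ 0 ∨ ζ F ≠ 0 := by
      by_contra hcon
      push_neg at hcon
      rw [Pi.sub_apply, Pi.smul_apply, hcon.1, hcon.2, smul_zero, sub_zero] at hF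
      exact hF rfl
    have hmemcard : F ∈ Γ ∧ (F.card : ℤ) = p + 1 + 1 := by
      rcases hwζ with h | h
      · exact hws F h
      · exact hζs F h
    have hxF : x ∉ F := by
      intro hxF
      have h1 : w F = c * ζ F := by
        have e1 : xpart x w F = w F := if_pos hxF
        have e2 : xpart x ζ F = ζ F := if_pos hxF
        rw [← e1, ← fromLk_toLk, hc, fromLk_smul, Pi.smul_apply, fromLk_toLk, smul_eq_mul, e2]
      rw [Pi.sub_apply, Pi.smul_apply, smul_eq_mul, h1, sub_self] at hF
      exact hF rfl
    exact ⟨⟨hmemcard.1, fun a ha => Finset.mem_compl.2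
      (fun hcc => hxF ((Finset.mem_singleton.1 hcc) ▸ ha))⟩, hmemcard.2⟩
  · rw [Dm_sub, Dm_smul, hζc, smul_zero, sub_zero, hwd]

lemma boundary_res_eq_zero {Γ : Set (Finset (Fin n))} (hΓ : IsComplex Γ) {p : ℤ}
    {z : Finset (Fin n) → k} (hz : IsSupported k Γ (p + 1) z) (hzc : Dm k z = 0) :
    boundary k Γ p (fun F => z F.1) = 0 :=
  extend_injective (p := p - 1) (by rw [← Dm_extend hΓ, extend_eq_self hz, hzc, extend_zero])

/-- One-dimensionality of top cycles, from `H ≃ k` and no faces above. -/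
lemma one_dim {Γ : Set (Finset (Fin n))} (hΓ : IsComplex Γ) {p : ℤ}
    (he : Nonempty (ReducedHomology k Γ p ≃ₗ[k] k))
    (htop : ∀ F ∈ Γ, (F.card : ℤ) ≠ p + 1 + 1) :
    ∀ u η, IsSupported k Γ (p + 1) u → Dm k u = 0 →
      IsSupported k Γ (p + 1) η → Dm k η = 0 → η ≠ 0 → ∃ c : k, u = c • η := by
  intro u η hus huc hηs hηc hη0
  have hsub : Subsingleton (Chains k Γ (p + 1)) :=
    ⟨fun a b => funext fun F => absurd F.2.2 (htop F.1 F.2.1)⟩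
  have hbd : ∀ f : Chains k Γ p, f ∈ boundaries k Γ p → f = 0 := by
    rintro f ⟨g, hg⟩
    have hg0 : g = 0 := Subsingleton.elim g 0
    rw [hg0] at hg
    rw [← hg]
    simp
  obtain ⟨e⟩ := he
  have hum : (fun F => u F.1) ∈ cycles k Γ p := LinearMap.mem_ker.2 (boundary_res_eq_zero hΓ hus huc)
  have hηm : (fun F => η F.1) ∈ cycles k Γ p := LinearMap.mem_ker.2 (boundary_res_eq_zero hΓ hηs hηc)
  set Q := (Submodule.comap (cycles k Γ p).subtype (boundaries k Γ p)).mkQ with hQ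
  have hmk : ∀ (f : ↥(cycles k Γ p)), Q f = 0 → f.1 = 0 := by
    intro f hf
    have : f ∈ Submodule.comap (cycles k Γ p).subtype (boundaries k Γ p) :=
      (Submodule.Quotient.mk_eq_zero _).1 hf
    exact hbd f.1 (Submodule.mem_comap.1 this)
  have heη : e (Q ⟨_, hηm⟩) ≠ 0 := by
    intro h0
    have h1 : Q ⟨_, hηm⟩ = 0 := by
      have := e.map_eq_zero_iff.1 h0
      exact this
    have h2 := hmk _ h1
    apply hη0
    rw [← extend_eq_self hηs, show (fun F => η F.1) = (0 : Chains k Γ p) from h2, extend_zero]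
  refine ⟨e (Q ⟨_, hum⟩) / e (Q ⟨_, hηm⟩), ?_⟩
  set c := e (Q ⟨_, hum⟩) / e (Q ⟨_, hηm⟩) with hcdef
  have hz : e (Q (⟨_, hum⟩ - c • ⟨_, hηm⟩)) = 0 := by
    rw [map_sub, map_smul, map_sub, map_smul, smul_eq_mul, hcdef,
      div_mul_cancel₀ _ heη, sub_self]
  have h1 : (⟨_, hum⟩ - c • ⟨_, hηm⟩ : ↥(cycles k Γ p)) = 0 → False ∨ True := fun _ => Or.inr trivial
  have h2 := hmk _ (e.map_eq_zero_iff.1 hz)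
  have h3 : (fun F => u F.1) = fun (F : {F : Finset (Fin n) // F ∈ Γ ∧ (F.card : ℤ) = p + 1}) => c * η F.1 := by
    funext F
    have := congrFun h2 F
    simp only [AddSubgroupClass.coe_sub, SetLike.val_smul, Pi.sub_apply, Pi.smul_apply,
      smul_eq_mul, Pi.zero_apply] at this
    exact sub_eq_zero.1 this
  have : u = extend Γ p (fun F => u F.1) := (extend_eq_self hus).symm
  rw [this, h3]
  have hsm : (fun (F : {F : Finset (Fin n) // F ∈ Γ ∧ (F.card : ℤ) = p + 1}) => c * η F.1)
      = c • (fun F => η F.1) := rfl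
  rw [hsm, extend_smul, extend_eq_self hηs]
lemma sgn_empty (y : Fin n) : sgn k (∅ : Finset (Fin n)) y = 1 := by
  rw [sgn, Finset.filter_empty, Finset.card_empty, pow_zero]

lemma sgn_singleton (v y : Fin n) : sgn k {v} y = if v < y then -1 else 1 := by
  rw [sgn, Finset.filter_singleton]
  split_ifs with h
  · rw [Finset.card_singleton, pow_one]
  · rw [Finset.card_empty, pow_zero]

lemma sgn_pair {v y : Fin n} (hvy : v ≠ y) : sgn k {v} y + sgn k {y} v = 0 := by
  rw [sgn_singleton, sgn_singleton]
  rcases hvy.lt_or_gt with h | h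
  · rw [if_pos h, if_neg (asymm h)]
    ring
  · rw [if_neg (asymm h), if_pos h]
    ring

section
variable (k)

noncomputable def pairChain (a b : Fin n) : Finset (Fin n) → k := fun F =>
  if F = {a} then 1 else if F = {b} then -1 else 0

end

lemma pairChain_supported {Γ : Set (Finset (Fin n))} {a b : Fin n}
    (ha : ({a} : Finset (Fin n)) ∈ Γ) (hb : ({b} : Finset (Fin n)) ∈ Γ) :
    IsSupported k Γ (0 + 1) (pairChain k a b) := by
  intro F hF
  rw [pairChain] at hF
  by_cases h1 : F = {a}
  · subst h1
    refine ⟨ha, by simp⟩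
  · rw [if_neg h1] at hF
    by_cases h2 : F = {b}
    · subst h2
      refine ⟨hb, by simp⟩
    · rw [if_neg h2] at hF
      exact absurd rfl hF

lemma pairChain_singleton {a b : Fin n} (hab : a ≠ b) (y : Fin n) :
    pairChain k a b {y} = (if y = a then 1 else 0) + (if y = b then -1 else 0) := by
  rw [pairChain]
  by_cases h1 : y = a
  · subst h1
    rw [if_pos rfl, if_pos rfl, if_neg hab, add_zero]
  · rw [if_neg (fun hc => h1 (Finset.singleton_inj.1 hc)), if_neg h1, zero_add]
    by_cases h2 : y = b
    · subst h2
      rw [if_pos rfl, if_pos rfl]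
    · rw [if_neg (fun hc => h2 (Finset.singleton_inj.1 hc)), if_neg h2]

lemma insert_ne_singleton {G : Finset (Fin n)} {y c : Fin n} (hG : G ≠ ∅) (hy : y ∉ G) :
    insert y G ≠ {c} := by
  intro h
  have hsub : G ⊆ {c} := h ▸ Finset.subset_insert y G
  rcases Finset.subset_singleton_iff.1 hsub with h0 | h0
  · exact hG h0
  · apply hy
    have hmem := Finset.mem_insert_self y G
    rw [h, ← h0] at hmem
    exact hmem

lemma pairChain_cycle {a b : Fin n} (hab : a ≠ b) : Dm k (pairChain k a b) = 0 := by
  funext G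
  rw [Dm, Pi.zero_apply]
  by_cases hG : G = ∅
  · subst hG
    have : ∀ y : Fin n, (if y ∉ (∅ : Finset (Fin n)) then
        sgn k ∅ y * pairChain k a b (insert y ∅) else 0)
        = (if y = a then 1 else 0) + (if y = b then (-1 : k) else 0) := by
      intro y
      rw [if_pos (Finset.notMem_empty y), sgn_empty, one_mul,
        show insert y (∅ : Finset (Fin n)) = {y} from rfl, pairChain_singleton hab]
    rw [Finset.sum_congr rfl (fun y _ => this y), Finset.sum_add_distrib,
      Finset.sum_ite_eq' Finset.univ a (fun _ => (1 : k)),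
      Finset.sum_ite_eq' Finset.univ b (fun _ => (-1 : k)), if_pos (Finset.mem_univ a),
      if_pos (Finset.mem_univ b)]
    ring
  · refine Finset.sum_eq_zero fun y _ => ?_
    by_cases hy : y ∉ G
    · rw [if_pos hy, pairChain, if_neg (insert_ne_singleton hG hy),
        if_neg (insert_ne_singleton hG hy), mul_zero]
    · rw [if_neg hy]

open Classical in
noncomputable def reachInd (Γ : Set (Finset (Fin n))) (a : Fin n) : Fin n → k := fun v =>
  if Relation.ReflTransGen (fun u w : Fin n => ({u, w} : Finset (Fin n)) ∈ Γ) a v then 1 else 0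

lemma reachInd_pos {Γ : Set (Finset (Fin n))} {a v : Fin n}
    (h : Relation.ReflTransGen (fun u w : Fin n => ({u, w} : Finset (Fin n)) ∈ Γ) a v) :
    reachInd (k := k) Γ a v = 1 := if_pos h

lemma reachInd_neg {Γ : Set (Finset (Fin n))} {a v : Fin n}
    (h : ¬ Relation.ReflTransGen (fun u w : Fin n => ({u, w} : Finset (Fin n)) ∈ Γ) a v) :
    reachInd (k := k) Γ a v = 0 := if_neg h

lemma reachInd_edge {Γ : Set (Finset (Fin n))} {a v y : Fin n}
    (hvy : ({v, y} : Finset (Fin n)) ∈ Γ) :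
    reachInd (k := k) Γ a v = reachInd (k := k) Γ a y := by
  by_cases hr : Relation.ReflTransGen (fun u w : Fin n => ({u, w} : Finset (Fin n)) ∈ Γ) a v
  · rw [reachInd_pos hr, reachInd_pos (hr.tail hvy)]
  · rw [reachInd_neg hr, reachInd_neg (fun h => hr (h.tail (by
      rw [Finset.pair_comm]
      exact hvy)))]

/-- Connectivity from vanishing reduced `H₀`. -/
lemma conn {Γ : Set (Finset (Fin n))} (hv : Van k Γ 0) {a b : Fin n}
    (ha : ({a} : Finset (Fin n)) ∈ Γ) (hb : ({b} : Finset (Fin n)) ∈ Γ) :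
    Relation.ReflTransGen (fun u w : Fin n => ({u, w} : Finset (Fin n)) ∈ Γ) a b := by
  by_cases hab : a = b
  · subst hab
    exact Relation.ReflTransGen.refl
  by_contra hreach
  obtain ⟨ψ, hψs, hψd⟩ := hv (pairChain k a b) (pairChain_supported ha hb) (pairChain_cycle hab)
  have hzero : ∑ v : Fin n, reachInd (k := k) Γ a v * Dm k ψ {v} = 0 := by
    have hrw : ∀ v : Fin n, reachInd (k := k) Γ a v * Dm k ψ {v} = ∑ y : Fin n,
        reachInd (k := k) Γ a v *
          (if y ∉ ({v} : Finset (Fin n)) then sgn k {v} y * ψ (insert y {v}) else 0) := by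
      intro v
      rw [Dm, Finset.mul_sum]
    rw [Finset.sum_congr rfl (fun v _ => hrw v), ← Finset.sum_product']
    refine Finset.sum_involution (fun q _ => (q.2, q.1)) ?_ ?_ ?_ ?_
    · rintro ⟨v, y⟩ _
      dsimp only
      by_cases hvy : v = y
      · subst hvy
        rw [if_neg (fun hc => hc (Finset.mem_singleton_self v)), mul_zero, add_zero]
      · rw [if_pos (fun hc => hvy (Finset.mem_singleton.1 hc).symm),
          if_pos (fun hc => hvy (Finset.mem_singleton.1 hc)),
          Finset.pair_comm v y]
        by_cases hψ0 : ψ (insert y ({v} : Finset (Fin n))) = 0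
        · rw [hψ0]
          ring
        · have hmem : insert y ({v} : Finset (Fin n)) ∈ Γ := (hψs _ hψ0).1
          have hedge : ({v, y} : Finset (Fin n)) ∈ Γ := by
            rw [Finset.pair_comm]
            exact hmem
          rw [reachInd_edge (k := k) (a := a) hedge]
          linear_combination (reachInd (k := k) Γ a y * ψ (insert y ({v} : Finset (Fin n)))) *
            sgn_pair (k := k) hvy
    · rintro ⟨v, y⟩ _ hne
      intro hc
      have h1 : y = v := congrArg Prod.fst hc
      subst h1
      rw [if_neg (fun hc2 => hc2 (Finset.mem_singleton_self y)), mul_zero] at hne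
      exact hne rfl
    · rintro ⟨v, y⟩ _
      exact Finset.mem_product.2 ⟨Finset.mem_univ _, Finset.mem_univ _⟩
    · rintro ⟨v, y⟩ _
      rfl
  have heval : ∑ v : Fin n, reachInd (k := k) Γ a v * Dm k ψ {v} = 1 := by
    rw [hψd]
    have hrw : ∀ v : Fin n, reachInd (k := k) Γ a v * pairChain k a b {v}
        = (if v = a then reachInd (k := k) Γ a v else 0)
          + (if v = b then -reachInd (k := k) Γ a v else 0) := by
      intro v
      rw [pairChain_singleton hab]
      split_ifs <;> ring
    rw [Finset.sum_congr rfl (fun v _ => hrw v), Finset.sum_add_distrib,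
      Finset.sum_ite_eq' Finset.univ a (fun v => reachInd (k := k) Γ a v),
      Finset.sum_ite_eq' Finset.univ b (fun v => -reachInd (k := k) Γ a v),
      if_pos (Finset.mem_univ a), if_pos (Finset.mem_univ b),
      reachInd_pos Relation.ReflTransGen.refl, reachInd_neg hreach]
    ring
  rw [hzero] at heval
  exact one_ne_zero heval.symm
lemma link_isComplex {Δ : Set (Finset (Fin n))} (hΔ : IsComplex Δ) (S : Finset (Fin n)) :
    IsComplex (link Δ S) := by
  rintro F ⟨hdis, hmem⟩ G hG
  exact ⟨Finset.disjoint_of_subset_left hG hdis,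
    hΔ _ hmem _ (Finset.union_subset_union hG (Finset.Subset.refl S))⟩

lemma restrict_isComplex {Δ : Set (Finset (Fin n))} (hΔ : IsComplex Δ) (R : Finset (Fin n)) :
    IsComplex (restrict Δ R) := by
  rintro F ⟨hmem, hsub⟩ G hG
  exact ⟨hΔ _ hmem _ hG, hG.trans hsub⟩

lemma link_empty (Δ : Set (Finset (Fin n))) : link Δ (∅ : Finset (Fin n)) = Δ := by
  ext F
  constructor
  · rintro ⟨_, hm⟩
    rwa [Finset.union_empty] at hm
  · intro hm
    exact ⟨Finset.disjoint_empty_right F, by rwa [Finset.union_empty]⟩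

lemma restrict_compl_empty (Γ : Set (Finset (Fin n))) :
    restrict Γ ((∅ : Finset (Fin n))ᶜ) = Γ := by
  ext F
  constructor
  · exact fun h => h.1
  · intro h
    exact ⟨h, fun y _ => Finset.mem_compl.2 (Finset.notMem_empty y)⟩

section
variable (k)

def Gor (Δ : Set (Finset (Fin n))) (d : ℕ) : Prop :=
  ∀ S ∈ Δ, ∀ p : ℤ,
    (p + S.card = (d : ℤ) - 1 → Nonempty (ReducedHomology k (link Δ S) p ≃ₗ[k] k)) ∧
    (p + S.card ≠ (d : ℤ) - 1 → Subsingleton (ReducedHomology k (link Δ S) p))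

end

lemma pure_faces {Δ : Set (Finset (Fin n))} {d : ℕ} (hΔ : IsComplex Δ)
    (hGor : Gor k Δ d) {S : Finset (Fin n)} (hS : S ∈ Δ) :
    ∃ F ∈ Δ, S ⊆ F ∧ F.card = d := by
  obtain ⟨φ, hφs, hφc, hφ0⟩ := exists_nonzero_cycle (link_isComplex hΔ S)
    ((hGor S hS ((d : ℤ) - 1 - S.card)).1 (by ring))
  obtain ⟨G, hG⟩ := Function.ne_iff.1 hφ0
  have h := hφs G (by simpa using hG)
  refine ⟨G ∪ S, h.1.2, Finset.subset_union_right, ?_⟩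
  rw [Finset.card_union_of_disjoint h.1.1]
  have h2 := h.2
  omega

lemma link_pure {Δ : Set (Finset (Fin n))} {d : ℕ} (hΔ : IsComplex Δ)
    (hGor : Gor k Δ d) {S : Finset (Fin n)} (hS : S ∈ Δ) {j : ℕ}
    (hj : S.card + j = d) {T : Finset (Fin n)} (hT : T ∈ link Δ S) :
    ∃ E ∈ link Δ S, T ⊆ E ∧ E.card = j := by
  obtain ⟨Fbig, hFm, hsub, hFc⟩ := pure_faces hΔ hGor hT.2
  have hSb : S ⊆ Fbig := Finset.subset_union_right.trans hsub
  refine ⟨Fbig \ S, ⟨Finset.sdiff_disjoint, ?_⟩, ?_, ?_⟩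
  · rw [Finset.sdiff_union_self_eq_union, Finset.union_eq_left.2 hSb]
    exact hFm
  · intro y hy
    exact Finset.mem_sdiff.2 ⟨hsub (Finset.mem_union_left _ hy),
      Finset.disjoint_left.1 hT.1 hy⟩
  · rw [Finset.card_sdiff_of_subset hSb]
    omega
/-- Ridge adjacency of `c`-faces. -/
def Adj (Λ : Set (Finset (Fin n))) (c : ℕ) (F F' : Finset (Fin n)) : Prop :=
  F ∈ Λ ∧ F' ∈ Λ ∧ F.card = c ∧ F'.card = c ∧ (F ∩ F').card + 1 = c

lemma pairChain_ne_zero {a b : Fin n} (hab : a ≠ b) : pairChain k a b ≠ 0 := by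
  intro h
  have := congrFun h {a}
  rw [pairChain, if_pos rfl, Pi.zero_apply] at this
  exact one_ne_zero this

/-- Nonvanishing of a top cycle propagates across ridges. -/
lemma prop_step {Δ : Set (Finset (Fin n))} {d : ℕ} (hΔ : IsComplex Δ) (hd : IsDim Δ d)
    (hGor : Gor k Δ d) {S : Finset (Fin n)} (hS : S ∈ Δ) {j : ℕ} (hj : S.card + j = d)
    {ζ : Finset (Fin n) → k} (hζs : IsSupported k (link Δ S) (j : ℤ) ζ) (hζc : Dm k ζ = 0)
    {F F' : Finset (Fin n)} (hadj : Adj (link Δ S) j F F') (hne : ζ F ≠ 0) : ζ F' ≠ 0 := by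
  obtain ⟨hFm, hF'm, hFc, hF'c, hGc⟩ := hadj
  have hGm : F ∩ F' ∈ link Δ S := (link_isComplex hΔ S) F hFm _ Finset.inter_subset_left
  -- extract the two extra vertices
  have hFd : (F \ (F ∩ F')).card = 1 := by
    rw [Finset.card_sdiff_of_subset Finset.inter_subset_left]
    omega
  obtain ⟨a, ha⟩ := Finset.card_eq_one.1 hFd
  have haF : a ∈ F := (Finset.mem_sdiff.1 (ha ▸ Finset.mem_singleton_self a)).1
  have haG : a ∉ F ∩ F' := (Finset.mem_sdiff.1 (ha ▸ Finset.mem_singleton_self a)).2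
  have hFeq : F = insert a (F ∩ F') := by
    ext y
    constructor
    · intro hy
      by_cases hyG : y ∈ F ∩ F'
      · exact Finset.mem_insert_of_mem hyG
      · have : y ∈ F \ (F ∩ F') := Finset.mem_sdiff.2 ⟨hy, hyG⟩
        rw [ha, Finset.mem_singleton] at this
        rw [this]
        exact Finset.mem_insert_self a _
    · intro hy
      rcases Finset.mem_insert.1 hy with h | h
      · exact h ▸ haF
      · exact Finset.inter_subset_left h
  have hF'd : (F' \ (F ∩ F')).card = 1 := by
    rw [Finset.card_sdiff_of_subset Finset.inter_subset_right]
    omega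
  obtain ⟨b, hb⟩ := Finset.card_eq_one.1 hF'd
  have hbF' : b ∈ F' := (Finset.mem_sdiff.1 (hb ▸ Finset.mem_singleton_self b)).1
  have hbG : b ∉ F ∩ F' := (Finset.mem_sdiff.1 (hb ▸ Finset.mem_singleton_self b)).2
  have hF'eq : F' = insert b (F ∩ F') := by
    ext y
    constructor
    · intro hy
      by_cases hyG : y ∈ F ∩ F'
      · exact Finset.mem_insert_of_mem hyG
      · have : y ∈ F' \ (F ∩ F') := Finset.mem_sdiff.2 ⟨hy, hyG⟩
        rw [hb, Finset.mem_singleton] at this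
        rw [this]
        exact Finset.mem_insert_self b _
    · intro hy
      rcases Finset.mem_insert.1 hy with h | h
      · exact h ▸ hbF'
      · exact Finset.inter_subset_right h
  have hab : a ≠ b := by
    intro h
    exact haG (Finset.mem_inter.2 ⟨haF, h ▸ hbF'⟩)
  -- the face T = S ∪ (F ∩ F') of cardinality d - 1
  have hTdis : Disjoint (F ∩ F') S := hGm.1
  have hTm : S ∪ (F ∩ F') ∈ Δ := by
    rw [Finset.union_comm]
    exact hGm.2
  have hTc : ((S ∪ (F ∩ F')).card : ℤ) = (d : ℤ) - 1 := by
    rw [Finset.card_union_of_disjoint hTdis.symm]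
    push_cast
    omega
  -- singleton faces of link Δ T
  have hvertex : ∀ y : Fin n, y ∉ F ∩ F' → insert y (F ∩ F') ∈ link Δ S →
      ({y} : Finset (Fin n)) ∈ link Δ (S ∪ (F ∩ F')) := by
    intro y hyG hym
    refine ⟨?_, ?_⟩
    · rw [Finset.disjoint_singleton_left, Finset.mem_union]
      rintro (h | h)
      · exact Finset.disjoint_left.1 hym.1 (Finset.mem_insert_self y _) h
      · exact hyG h
    · refine hΔ _ hym.2 _ ?_
      intro z hz
      simp only [Finset.mem_union, Finset.mem_insert, Finset.mem_singleton] at hz ⊢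
      tauto
  have htop : ∀ E ∈ link Δ (S ∪ (F ∩ F')), ((E.card : ℤ)) ≠ 0 + 1 + 1 := by
    intro E hE hcon
    have h1 : E ∪ (S ∪ (F ∩ F')) ∈ Δ := hE.2
    have h2 := hd.1 _ h1
    rw [Finset.card_union_of_disjoint hE.1] at h2
    omega
  have h1dim := one_dim (link_isComplex hΔ (S ∪ (F ∩ F')))
    ((hGor _ hTm 0).1 (by omega)) htop
  have ha_lk : ({a} : Finset (Fin n)) ∈ link Δ (S ∪ (F ∩ F')) :=
    hvertex a haG (by rw [← hFeq]; exact hFm)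
  have hb_lk : ({b} : Finset (Fin n)) ∈ link Δ (S ∪ (F ∩ F')) :=
    hvertex b hbG (by rw [← hF'eq]; exact hF'm)
  have killer : ∀ y : Fin n, y ∉ F ∩ F' → ζ (insert y (F ∩ F')) ≠ 0 → y = a ∨ y = b := by
    intro y hyG hy0
    by_contra hcon
    push_neg at hcon
    have hym : insert y (F ∩ F') ∈ link Δ S := (hζs _ hy0).1
    have hy_lk := hvertex y hyG hym
    have hay : a ≠ y := fun h => hcon.1 h.symm
    obtain ⟨c₁, hc₁⟩ := h1dim (pairChain k a y) (pairChain k a b)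
      (pairChain_supported ha_lk hy_lk) (pairChain_cycle hay)
      (pairChain_supported ha_lk hb_lk) (pairChain_cycle hab) (pairChain_ne_zero hab)
    have heval := congrFun hc₁ {y}
    rw [pairChain, if_neg (fun hc => hay (Finset.singleton_inj.1 hc).symm), if_pos rfl,
      Pi.smul_apply, pairChain, if_neg (fun hc => hay (Finset.singleton_inj.1 hc).symm),
      if_neg (fun hc => hcon.2 (Finset.singleton_inj.1 hc)), smul_zero] at heval
    exact absurd heval (by norm_num)
  have h0 : ∑ y : Fin n, (if y ∉ F ∩ F' then sgn k (F ∩ F') y * ζ (insert y (F ∩ F'))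
      else 0) = 0 := by
    have := congrFun hζc (F ∩ F')
    rwa [Dm, Pi.zero_apply] at this
  have hsum : ∑ y ∈ ({a, b} : Finset (Fin n)), (if y ∉ F ∩ F' then
      sgn k (F ∩ F') y * ζ (insert y (F ∩ F')) else 0) = 0 := by
    refine (Finset.sum_subset (Finset.subset_univ _) ?_).trans h0
    intro y _ hy
    by_cases hyG : y ∉ F ∩ F'
    · rw [if_pos hyG]
      by_cases hz : ζ (insert y (F ∩ F')) = 0
      · rw [hz, mul_zero]
      · rcases killer y hyG hz with h | h
        · exact absurd (by rw [h]; exact Finset.mem_insert_self a _) hy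
        · exact absurd (by rw [h]; exact Finset.mem_insert_of_mem (Finset.mem_singleton_self b)) hy
    · rw [if_neg hyG]
  rw [Finset.sum_pair hab, if_pos haG, if_pos hbG, ← hFeq, ← hF'eq] at hsum
  intro hF'0
  rw [hF'0, mul_zero, add_zero] at hsum
  exact (mul_ne_zero (sgn_ne_zero _ _) hne) hsum
/-- Strong (ridge-path) connectivity of top faces of links. -/
lemma strong_conn {Δ : Set (Finset (Fin n))} {d : ℕ} (hΔ : IsComplex Δ) (hd : IsDim Δ d)
    (hGor : Gor k Δ d) :
    ∀ (j : ℕ) (S : Finset (Fin n)), S ∈ Δ → S.card + j = d →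
      ∀ F F', F ∈ link Δ S → F' ∈ link Δ S → F.card = j → F'.card = j →
        Relation.ReflTransGen (Adj (link Δ S) j) F F' := by
  intro j
  induction j with
  | zero =>
    intro S hS hcard F F' hFm hF'm hFc hF'c
    rw [Finset.card_eq_zero.1 hFc, Finset.card_eq_zero.1 hF'c]
  | succ j ih =>
    intro S hS hcard F F' hFm hF'm hFc hF'c
    -- common-vertex connectivity via the induction hypothesis
    have hCV : ∀ (v : Fin n) (F₁ F₂ : Finset (Fin n)), F₁ ∈ link Δ S → F₂ ∈ link Δ S →
        F₁.card = j + 1 → F₂.card = j + 1 → v ∈ F₁ → v ∈ F₂ →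
        Relation.ReflTransGen (Adj (link Δ S) (j + 1)) F₁ F₂ := by
      intro v F₁ F₂ h₁ h₂ hc₁ hc₂ hv₁ hv₂
      have hvS : v ∉ S := Finset.disjoint_left.1 h₁.1 hv₁
      have hS'm : insert v S ∈ Δ := by
        refine hΔ _ h₁.2 _ ?_
        intro y hy
        simp only [Finset.mem_insert, Finset.mem_union] at hy ⊢
        rcases hy with rfl | hy
        · exact Or.inl hv₁
        · exact Or.inr hy
      have hS'c : (insert v S).card + j = d := by
        rw [Finset.card_insert_of_notMem hvS]
        omega
      have hmem : ∀ (E : Finset (Fin n)), E ∈ link Δ S → E.card = j + 1 → v ∈ E →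
          E.erase v ∈ link Δ (insert v S) := by
        intro E hE hEc hvE
        refine ⟨?_, ?_⟩
        · intro t htE htS
          change t ⊆ _ at htE htS
          intro y hy
          have h1 := htE hy
          have h2 := htS hy
          simp only [Finset.mem_erase] at h1
          simp only [Finset.mem_insert] at h2
          rcases h2 with h2 | h2
          · exact absurd h2 h1.1
          · exact absurd h2 (Finset.disjoint_left.1 hE.1 h1.2)
        · have heq : E.erase v ∪ insert v S = E ∪ S := by
            ext y
            simp only [Finset.mem_union, Finset.mem_erase, Finset.mem_insert]
            constructor
            · rintro (⟨hyv, hyE⟩ | (rfl | hyS))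
              · exact Or.inl hyE
              · exact Or.inl hvE
              · exact Or.inr hyS
            · intro h
              rcases h with hyE | hyS
              · by_cases hyv : y = v
                · exact Or.inr (Or.inl hyv)
                · exact Or.inl ⟨hyv, hyE⟩
              · exact Or.inr (Or.inr hyS)
          rw [heq]
          exact hE.2
      have hrtg := ih (insert v S) hS'm hS'c (F₁.erase v) (F₂.erase v)
        (hmem F₁ h₁ hc₁ hv₁) (hmem F₂ h₂ hc₂ hv₂)
        (by rw [Finset.card_erase_of_mem hv₁, hc₁]; omega) (by rw [Finset.card_erase_of_mem hv₂, hc₂]; omega)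
      have hstep : ∀ E E' : Finset (Fin n), Adj (link Δ (insert v S)) j E E' →
          Adj (link Δ S) (j + 1) (insert v E) (insert v E') := by
        intro E E' hadj
        obtain ⟨hEm, hE'm, hEc, hE'c, hEi⟩ := hadj
        have hvE : v ∉ E := fun hc =>
          Finset.disjoint_left.1 hEm.1 hc (Finset.mem_insert_self v S)
        have hvE' : v ∉ E' := fun hc =>
          Finset.disjoint_left.1 hE'm.1 hc (Finset.mem_insert_self v S)
        have hmem2 : ∀ (E : Finset (Fin n)), E ∈ link Δ (insert v S) →
            insert v E ∈ link Δ S := by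
          intro E hE
          refine ⟨?_, ?_⟩
          · intro t htE htS
            intro y hy
            have h1 := htE hy
            have h2 := htS hy
            simp only [Finset.le_eq_subset, Finset.mem_insert] at h1
            rcases h1 with rfl | h1
            · exact absurd h2 hvS
            · exact absurd h2 (fun hc => Finset.disjoint_left.1 hE.1 h1
                (Finset.mem_insert_of_mem hc))
          · have heq : insert v E ∪ S = E ∪ insert v S := by
              rw [Finset.insert_union, ← Finset.union_insert]
            rw [heq]
            exact hE.2
        refine ⟨hmem2 E hEm, hmem2 E' hE'm, ?_, ?_, ?_⟩
        · rw [Finset.card_insert_of_notMem hvE, hEc]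
        · rw [Finset.card_insert_of_notMem hvE', hE'c]
        · have hi : insert v E ∩ insert v E' = insert v (E ∩ E') := by
            ext y
            simp only [Finset.mem_inter, Finset.mem_insert]
            tauto
          rw [hi, Finset.card_insert_of_notMem (fun hc => hvE (Finset.mem_inter.1 hc).1)]
          omega
      have hlift := Relation.ReflTransGen.lift (fun E => insert v E)
        (fun E E' h => hstep E E' h) _ _ hrtg
      dsimp only [Function.onFun] at hlift
      rwa [Finset.insert_erase hv₁, Finset.insert_erase hv₂] at hlift
    by_cases hj0 : j = 0
    · subst hj0
      obtain ⟨a, rfl⟩ := Finset.card_eq_one.1 hFc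
      obtain ⟨b, rfl⟩ := Finset.card_eq_one.1 hF'c
      by_cases hab : a = b
      · subst hab
        exact Relation.ReflTransGen.refl
      · refine Relation.ReflTransGen.single ⟨hFm, hF'm, hFc, hF'c, ?_⟩
        rw [Finset.singleton_inter_of_notMem (fun hc => hab (Finset.mem_singleton.1 hc)),
          Finset.card_empty]
    · -- j ≥ 1 : link Δ S is connected
      obtain ⟨a, haF⟩ := Finset.card_pos.1 (by omega : 0 < F.card)
      obtain ⟨b, hbF'⟩ := Finset.card_pos.1 (by omega : 0 < F'.card)
      have ha : ({a} : Finset (Fin n)) ∈ link Δ S :=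
        (link_isComplex hΔ S) F hFm {a} (Finset.singleton_subset_iff.2 haF)
      have hb : ({b} : Finset (Fin n)) ∈ link Δ S :=
        (link_isComplex hΔ S) F' hF'm {b} (Finset.singleton_subset_iff.2 hbF')
      have hvan : Van k (link Δ S) 0 := van_of_subsingleton (link_isComplex hΔ S)
        ((hGor S hS 0).2 (by omega))
      have hreach := conn hvan ha hb
      -- induct along the edge path
      have hclaim : ∀ u : Fin n,
          Relation.ReflTransGen (fun u w : Fin n => ({u, w} : Finset (Fin n)) ∈ link Δ S) u b →
          ∀ F₁, F₁ ∈ link Δ S → F₁.card = j + 1 → u ∈ F₁ →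
            Relation.ReflTransGen (Adj (link Δ S) (j + 1)) F₁ F' := by
        intro u hu
        induction hu using Relation.ReflTransGen.head_induction_on with
        | refl =>
          intro F₁ h₁ hc₁ hb₁
          exact hCV b F₁ F' h₁ hF'm hc₁ hF'c hb₁ hbF'
        | head hedge _ ihp =>
          rename_i u' c' _
          intro F₁ h₁ hc₁ hu₁
          obtain ⟨F₃, hF₃m, hF₃sub, hF₃c⟩ := link_pure hΔ hGor hS hcard hedge
          have h1 : Relation.ReflTransGen (Adj (link Δ S) (j + 1)) F₁ F₃ :=
            hCV u' F₁ F₃ h₁ hF₃m hc₁ hF₃c hu₁ (hF₃sub (Finset.mem_insert_self u' _))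
          have h2 := ihp F₃ hF₃m hF₃c
            (hF₃sub (Finset.mem_insert_of_mem (Finset.mem_singleton_self c')))
          exact h1.trans h2
      exact hclaim a hreach F hFm hFc haF
/-- A nonzero top cycle of a Gorenstein* link is supported at every vertex. -/
lemma support_full {Δ : Set (Finset (Fin n))} {d : ℕ} (hΔ : IsComplex Δ) (hd : IsDim Δ d)
    (hGor : Gor k Δ d) {S : Finset (Fin n)} (hS : S ∈ Δ) {j : ℕ} (hj : S.card + j = d)
    {ζ : Finset (Fin n) → k} (hζs : IsSupported k (link Δ S) (j : ℤ) ζ) (hζc : Dm k ζ = 0)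
    (hζ0 : ζ ≠ 0) {x : Fin n} (hx : ({x} : Finset (Fin n)) ∈ link Δ S) :
    ∃ F, x ∈ F ∧ ζ F ≠ 0 := by
  obtain ⟨F₀, hF₀⟩ := Function.ne_iff.1 hζ0
  have hF₀' : ζ F₀ ≠ 0 := by simpa using hF₀
  have h₀ := hζs F₀ hF₀'
  have hxS : x ∉ S := Finset.disjoint_singleton_left.1 hx.1
  have hxSm : insert x S ∈ Δ := by
    have := hx.2
    rwa [← Finset.insert_eq] at this
  have hxSc : (insert x S).card = S.card + 1 := Finset.card_insert_of_notMem hxS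
  obtain ⟨φ, hφs, hφc, hφ0⟩ := exists_nonzero_cycle (link_isComplex hΔ (insert x S))
    ((hGor (insert x S) hxSm ((d : ℤ) - 1 - (insert x S).card)).1 (by ring))
  obtain ⟨G, hG⟩ := Function.ne_iff.1 hφ0
  have hGm := hφs G (by simpa using hG)
  have hxG : x ∉ G := fun hc =>
    Finset.disjoint_left.1 hGm.1.1 hc (Finset.mem_insert_self x S)
  have hF₁m : insert x G ∈ link Δ S := by
    refine ⟨?_, ?_⟩
    · intro t htE htS
      intro y hy
      have h1 := htE hy
      have h2 := htS hy
      simp only [Finset.le_eq_subset, Finset.mem_insert] at h1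
      rcases h1 with rfl | h1
      · exact absurd h2 hxS
      · exact absurd h2 (fun hc => Finset.disjoint_left.1 hGm.1.1 h1
          (Finset.mem_insert_of_mem hc))
    · have heq : insert x G ∪ S = G ∪ insert x S := by
        rw [Finset.insert_union, ← Finset.union_insert]
      rw [heq]
      exact hGm.1.2
  have hF₁c : (insert x G).card = j := by
    rw [Finset.card_insert_of_notMem hxG]
    have := hGm.2
    rw [hxSc] at this
    omega
  have hF₀c : F₀.card = j := by
    have := h₀.2
    omega
  have hrtg := strong_conn hΔ hd hGor j S hS hj F₀ (insert x G) h₀.1 hF₁m hF₀c hF₁c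
  have hprop : ∀ F₂, Relation.ReflTransGen (Adj (link Δ S) j) F₀ F₂ → ζ F₂ ≠ 0 := by
    intro F₂ h
    induction h with
    | refl => exact hF₀'
    | tail h1 h2 ihp => exact prop_step hΔ hd hGor hS hj hζs hζc h2 ihp
  exact ⟨insert x G, Finset.mem_insert_self x G, hprop _ hrtg⟩
lemma restrict_erase_eq {Γ : Set (Finset (Fin n))} (hΓ : IsComplex Γ) {R : Finset (Fin n)}
    {x : Fin n} (hxR : x ∈ R) (hxv : ({x} : Finset (Fin n)) ∉ restrict Γ (R.erase x)ᶜ) :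
    restrict Γ Rᶜ = restrict Γ (R.erase x)ᶜ := by
  ext F
  constructor
  · rintro ⟨hm, hsub⟩
    refine ⟨hm, fun y hy => ?_⟩
    have := hsub hy
    simp only [Finset.mem_compl, Finset.mem_erase] at this ⊢
    tauto
  · rintro ⟨hm, hsub⟩
    have hxF : x ∉ F := by
      intro hc
      exact hxv ⟨hΓ _ hm _ (Finset.singleton_subset_iff.2 hc),
        (Finset.singleton_subset_iff.2 (hsub hc))⟩
    refine ⟨hm, fun y hy => ?_⟩
    have h1 := hsub hy
    rw [Finset.mem_compl] at h1 ⊢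
    intro hc
    apply h1
    rw [Finset.mem_erase]
    exact ⟨fun he => hxF (by rw [← he]; exact hy), hc⟩

lemma restrict_insert_eq {Γ : Set (Finset (Fin n))} {R : Finset (Fin n)} {x : Fin n}
    (hxR : x ∈ R) :
    restrict Γ Rᶜ = restrict (restrict Γ (R.erase x)ᶜ) {x}ᶜ := by
  ext F
  constructor
  · rintro ⟨hm, hsub⟩
    refine ⟨⟨hm, fun y hy => ?_⟩, fun y hy => ?_⟩
    · have := hsub hy
      simp only [Finset.mem_compl, Finset.mem_erase] at this ⊢
      tauto
    · have := hsub hy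
      simp only [Finset.mem_compl, Finset.mem_singleton] at this ⊢
      intro hc
      exact this (hc ▸ hxR)
  · rintro ⟨⟨hm, hsub1⟩, hsub2⟩
    refine ⟨hm, fun y hy => ?_⟩
    have h1 := hsub1 hy
    have h2 := hsub2 hy
    simp only [Finset.mem_compl, Finset.mem_erase, Finset.mem_singleton] at h1 h2 ⊢
    intro hc
    exact h1 ⟨h2, hc⟩

lemma link_restrict_eq {Δ : Set (Finset (Fin n))} {S R' : Finset (Fin n)} {x : Fin n}
    (hxS : x ∉ S) (hxR' : x ∉ R') :
    link (restrict (link Δ S) R'ᶜ) {x} = restrict (link Δ (insert x S)) R'ᶜ := by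
  have hins : ∀ F : Finset (Fin n), F ∪ {x} ∪ S = F ∪ insert x S := by
    intro F
    ext y
    simp only [Finset.mem_union, Finset.mem_singleton, Finset.mem_insert]
    tauto
  ext F
  constructor
  · rintro ⟨hdis, ⟨⟨hdis2, hmem⟩, hsub⟩⟩
    have hxF : x ∉ F := Finset.disjoint_singleton_right.1 hdis
    refine ⟨⟨?_, ?_⟩, ?_⟩
    · intro t ht1 ht2 y hy
      have h1 := ht1 hy
      have h2 := ht2 hy
      simp only [Finset.le_eq_subset, Finset.mem_insert] at h2
      rcases h2 with rfl | h2
      · exact (hxF h1).elim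
      · exact (Finset.disjoint_left.1 hdis2 (Finset.mem_union_left _ h1) h2).elim
    · rw [← hins]
      exact hmem
    · intro y hy
      exact hsub (Finset.mem_union_left _ hy)
  · rintro ⟨⟨hdis, hmem⟩, hsub⟩
    have hxF : x ∉ F := fun hc =>
      Finset.disjoint_left.1 hdis hc (Finset.mem_insert_self x S)
    refine ⟨Finset.disjoint_singleton_right.2 hxF, ⟨⟨?_, ?_⟩, ?_⟩⟩
    · intro t ht1 ht2 y hy
      have h1 := ht1 hy
      have h2 := ht2 hy
      simp only [Finset.le_eq_subset, Finset.mem_union, Finset.mem_singleton] at h1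
      rcases h1 with h1 | rfl
      · exact (Finset.disjoint_left.1 hdis h1 (Finset.mem_insert_of_mem h2)).elim
      · exact (hxS h2).elim
    · rw [hins]
      exact hmem
    · intro y hy
      rcases Finset.mem_union.1 hy with h | h
      · exact hsub h
      · rw [Finset.mem_singleton.1 h]
        exact Finset.mem_compl.2 hxR'

/-- The main induction: vanishing of reduced homology of restrictions of links. -/
lemma main_vanish {Δ : Set (Finset (Fin n))} {d : ℕ} (hΔ : IsComplex Δ) (hd : IsDim Δ d)
    (hGor : Gor k Δ d) :
    ∀ (m : ℕ) (R : Finset (Fin n)), R.card = m → ∀ S ∈ Δ, ∀ p : ℤ,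
      (p + S.card + R.card ≤ (d : ℤ) - 2 ∨
        (p + S.card + R.card = (d : ℤ) - 1 ∧ R.Nonempty)) →
      Van k (restrict (link Δ S) Rᶜ) p := by
  intro m
  induction m with
  | zero =>
    intro R hR S hS p hcond
    have hRe : R = ∅ := Finset.card_eq_zero.1 hR
    subst hRe
    rw [restrict_compl_empty]
    have h0 : ((∅ : Finset (Fin n)).card : ℤ) = 0 := by simp
    rcases hcond with h | h
    · exact van_of_subsingleton (link_isComplex hΔ S) ((hGor S hS p).2 (by omega))
    · exact absurd h.2 (by simp)
  | succ m ih =>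
    intro R hR S hS p hcond
    obtain ⟨x, hxR⟩ := Finset.card_pos.1 (show 0 < R.card by omega)
    have hR' : (R.erase x).card = m := by rw [Finset.card_erase_of_mem hxR, hR]; omega
    have h1 : ((R.erase x).card : ℤ) = m := by exact_mod_cast hR'
    have h2 : (R.card : ℤ) = m + 1 := by exact_mod_cast hR
    have hnum : p + S.card + R.card ≤ (d : ℤ) - 1 := by
      rcases hcond with h | h <;> omega
    by_cases hxv : ({x} : Finset (Fin n)) ∈ restrict (link Δ S) (R.erase x)ᶜ
    case neg =>
      rw [restrict_erase_eq (link_isComplex hΔ S) hxR hxv]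
      exact ih (R.erase x) hR' S hS p (Or.inl (by omega))
    case pos =>
      have hxlk : ({x} : Finset (Fin n)) ∈ link Δ S := hxv.1
      have hxS : x ∉ S := Finset.disjoint_singleton_left.1 hxlk.1
      have hxSm : insert x S ∈ Δ := by
        have := hxlk.2
        rwa [← Finset.insert_eq] at this
      have hxSc : ((insert x S).card : ℤ) = (S.card : ℤ) + 1 := by
        rw [Finset.card_insert_of_notMem hxS]
        push_cast
        omega
      have hlkeq := link_restrict_eq (Δ := Δ) (S := S) hxS (Finset.notMem_erase x R)
      have hΓ' : IsComplex (restrict (link Δ S) (R.erase x)ᶜ) :=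
        restrict_isComplex (link_isComplex hΔ S) _
      have hΓv : Van k (restrict (link Δ S) (R.erase x)ᶜ) p :=
        ih (R.erase x) hR' S hS p (Or.inl (by omega))
      rw [restrict_insert_eq (Γ := link Δ S) hxR]
      rcases hcond with hleft | ⟨heq, hne⟩
      · -- generic case (CM range)
        refine gen_chase hΓ' x p hΓv ?_
        rw [hlkeq]
        exact ih (R.erase x) hR' (insert x S) hxSm p (Or.inl (by omega))
      · by_cases hm : m = 0
        · -- the hard case |R| = 1
          subst hm
          have hR'e : R.erase x = ∅ := Finset.card_eq_zero.1 hR'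
          rw [hR'e, restrict_compl_empty]
          rw [hR'e, restrict_compl_empty, restrict_compl_empty] at hlkeq
          have hSd : S.card ≤ d := hd.1 S hS
          have htop : ∀ F ∈ link Δ (insert x S), ((F.card : ℤ)) ≠ p + 1 + 1 := by
            intro F hF hcon
            have hu : F ∪ insert x S ∈ Δ := hF.2
            have hb := hd.1 _ hu
            rw [Finset.card_union_of_disjoint hF.1] at hb
            have hb' : (F.card : ℤ) + ((insert x S).card : ℤ) ≤ d := by push_cast at hb ⊢; omega
            omega
          have h1d := one_dim (link_isComplex hΔ (insert x S))
            ((hGor _ hxSm p).1 (by omega)) htop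
          rw [← hlkeq] at h1d
          refine hard_chase (link_isComplex hΔ S) x p
            (van_of_subsingleton (link_isComplex hΔ S) ((hGor S hS p).2 (by omega)))
            (exists_nonzero_cycle (link_isComplex hΔ S) ((hGor S hS (p + 1)).1 (by omega)))
            ?_ h1d
          intro ζ hζs hζc hζ0
          have hSd : S.card ≤ d := hd.1 S hS
          refine support_full hΔ hd hGor hS (j := d - S.card) (by omega) ?_ hζc hζ0 hxlk
          intro F hF
          obtain ⟨hm1, hm2⟩ := hζs F hF
          exact ⟨hm1, by omega⟩
        · -- |R| ≥ 2
          refine gen_chase hΓ' x p hΓv ?_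
          rw [hlkeq]
          refine ih (R.erase x) hR' (insert x S) hxSm p (Or.inr ⟨by omega, ?_⟩)
          exact Finset.card_pos.1 (show 0 < (R.erase x).card by omega)
/-- a Gorenstein* complex satisfies `H̃_p(Δ_{-R}) = 0` whenever
`p + |R| = d - 1` and `p ≤ d - 2`; in particular it is 2-Cohen-Macaulay. -/
theorem stmt19 (k : Type) [Field k] {n : ℕ} (Δ : Set (Finset (Fin n)))
    (hΔ : IsComplex Δ) (d : ℕ) (hd : IsDim Δ d)
    (hGor : ∀ S ∈ Δ, ∀ p : ℤ,
      (p + S.card = (d : ℤ) - 1 →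
        Nonempty (ReducedHomology k (link Δ S) p ≃ₗ[k] k)) ∧
      (p + S.card ≠ (d : ℤ) - 1 →
        Subsingleton (ReducedHomology k (link Δ S) p))) :
    ∀ (p : ℤ) (R : Finset (Fin n)), p + R.card = (d : ℤ) - 1 → p ≤ (d : ℤ) - 2 →
      Subsingleton (ReducedHomology k (restrict Δ Rᶜ) p) := by
  intro p R hpR hp
  have h0 : (∅ : Finset (Fin n)) ∈ Δ := by
    obtain ⟨F, hF, _⟩ := hd.2
    exact hΔ F hF ∅ (Finset.empty_subset F)
  have hGor' : Gor k Δ d := hGor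
  have hc0 : ((∅ : Finset (Fin n)).card : ℤ) = 0 := by simp
  have hRne : R.Nonempty := Finset.card_pos.1 (show 0 < R.card by omega)
  have hmain := main_vanish hΔ hd hGor' R.card R rfl ∅ h0 p (Or.inr ⟨by omega, hRne⟩)
  rw [link_empty] at hmain
  exact subsingleton_of_van (restrict_isComplex hΔ Rᶜ) hmain

end SCx
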